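/- The (2n+1)-star polygonal curve, formed by connecting 2n+1 equally spaced points on a circle where each point is connected to the point n steps ahead, has exactly (n-1)(2n+1) self-intersection points. -/

import Mathlib

noncomputable def starVertex (n k : ℕ) : ℂ :=
  Complex.exp (2 * Real.pi * Complex.I * k / (2 * n + 1))

namespace StarAux

open Complex Real

noncomputable def ww (n : ℕ) : ℂ := Complex.exp (Real.pi * Complex.I / (2 * n + 1))

lemma ww_pow (n a : ℕ) : ww n ^ a = Complex.exp (a * (Real.pi * Complex.I / (2 * n + 1))) := by
  rw [Complex.exp_nat_mul, ww]

lemma hprim (n : ℕ) : IsPrimitiveRoot (ww n) (2 * (2 * n + 1)) := by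
  have h := Complex.isPrimitiveRoot_exp (2 * (2 * n + 1)) (by positivity)
  have h1 : ((2 * n + 1 : ℕ) : ℂ) ≠ 0 := Nat.cast_ne_zero.mpr (by omega)
  push_cast at h1
  convert h using 2
  rw [ww]
  congr 1
  push_cast
  rw [div_eq_div_iff h1 (mul_ne_zero two_ne_zero h1)]
  ring

lemma starVertex_eq (n k : ℕ) : starVertex n k = ww n ^ (2 * k) := by
  rw [ww_pow, starVertex]
  congr 1
  push_cast
  ring

lemma ww_pow_two_mul_mod (n a : ℕ) : ww n ^ (2 * (a % (2 * n + 1))) = ww n ^ (2 * a) := by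
  conv_rhs => rw [← Nat.div_add_mod a (2 * n + 1)]
  rw [show 2 * ((2 * n + 1) * (a / (2 * n + 1)) + a % (2 * n + 1))
      = 2 * (2 * n + 1) * (a / (2 * n + 1)) + 2 * (a % (2 * n + 1)) by ring]
  rw [pow_add, pow_mul (ww n) (2*(2*n+1)) (a/(2*n+1)), (hprim n).pow_eq_one, one_pow, one_mul]

lemma starVertex_mod (n k : ℕ) : starVertex n (k % (2 * n + 1)) = ww n ^ (2 * k) := by
  rw [starVertex_eq, ww_pow_two_mul_mod]

lemma ww_ne_zero (n : ℕ) : ww n ≠ 0 := Complex.exp_ne_zero _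

lemma conj_ww_pow (n a : ℕ) : (starRingEnd ℂ) (ww n ^ a) = (ww n ^ a)⁻¹ := by
  rw [ww_pow, ← Complex.exp_conj, ← Complex.exp_neg]
  congr 1
  have h : ((a : ℂ) * (Real.pi * Complex.I / (2 * n + 1))) = ((a * Real.pi / (2*n+1) : ℝ) : ℂ) * Complex.I := by
    push_cast; ring
  rw [h, map_mul, Complex.conj_ofReal, Complex.conj_I]
  push_cast
  ring

end StarAux

namespace StarAux
open Complex Real

lemma hprim2 (n : ℕ) : IsPrimitiveRoot (ww n ^ 2) (2 * n + 1) :=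
  (hprim n).pow (by positivity) rfl

lemma ww_pow_eq (n a : ℕ) :
    ww n ^ a = (Real.cos (a * Real.pi / (2 * n + 1)) : ℂ)
      + (Real.sin (a * Real.pi / (2 * n + 1)) : ℂ) * Complex.I := by
  rw [ww_pow]
  have h : ((a : ℂ) * (Real.pi * Complex.I / (2 * n + 1)))
      = ((a * Real.pi / (2 * n + 1) : ℝ) : ℂ) * Complex.I := by push_cast; ring
  rw [h, Complex.exp_mul_I, Complex.ofReal_cos, Complex.ofReal_sin]

lemma ww_pow_inv_eq (n a : ℕ) :
    (ww n ^ a)⁻¹ = (Real.cos (a * Real.pi / (2 * n + 1)) : ℂ)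
      - (Real.sin (a * Real.pi / (2 * n + 1)) : ℂ) * Complex.I := by
  rw [ww_pow, ← Complex.exp_neg]
  have h : -((a : ℂ) * (Real.pi * Complex.I / (2 * n + 1)))
      = ((-(a * Real.pi / (2 * n + 1)) : ℝ) : ℂ) * Complex.I := by push_cast; ring
  rw [h, Complex.exp_mul_I, Complex.ofReal_neg, Complex.cos_neg, Complex.sin_neg,
    Complex.ofReal_cos, Complex.ofReal_sin]
  ring

/-- complex version of sin -/
lemma sin_eq (n a : ℕ) :
    ((Real.sin (a * Real.pi / (2 * n + 1)) : ℝ) : ℂ)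
      = (ww n ^ a - (ww n ^ a)⁻¹) / (2 * Complex.I) := by
  rw [ww_pow_inv_eq, ww_pow_eq, eq_div_iff (by simp [Complex.I_ne_zero] : (2 : ℂ) * Complex.I ≠ 0)]
  ring

lemma ww_pow_ne_one (n : ℕ) {a : ℕ} (h0 : 0 < a) (h1 : a < 2 * (2 * n + 1)) :
    ww n ^ a ≠ 1 := by
  exact (hprim n).pow_ne_one_of_pos_of_lt h0.ne' h1

lemma one_sub_ne (n : ℕ) {a : ℕ} (h0 : 0 < a) (h1 : a ≤ 2 * n) :
    1 - ww n ^ (2 * a) ≠ 0 := by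
  intro hc
  have : ww n ^ (2 * a) = 1 := by linear_combination -hc
  exact ww_pow_ne_one n (by omega) (by omega) this

lemma one_add_ne (n : ℕ) {a : ℕ} (h1 : a ≤ n) : 1 + ww n ^ (2 * a) ≠ 0 := by
  intro hc
  have hm1 : ww n ^ (2 * a) = -1 := by linear_combination hc
  rcases Nat.eq_zero_or_pos a with rfl | ha
  · norm_num at hm1
  · have h4 : ww n ^ (4 * a) = 1 := by
      have : ww n ^ (4 * a) = (ww n ^ (2 * a)) ^ 2 := by rw [← pow_mul]; ring_nf
      rw [this, hm1]; ring
    exact ww_pow_ne_one n (by omega) (by omega) h4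

end StarAux

namespace StarAux
open Complex Real

/-- Points of the open segment between two vertices satisfy the chord's line equation. -/
lemma line_eq (n : ℕ) {a b : ℕ} {x : ℂ}
    (hx : x ∈ openSegment ℝ (ww n ^ (2 * a)) (ww n ^ (2 * b))) :
    x + (ww n ^ (2 * a) * ww n ^ (2 * b)) * (starRingEnd ℂ) x
      = ww n ^ (2 * a) + ww n ^ (2 * b) := by
  obtain ⟨u, v, hu, hv, huv, rfl⟩ := hx
  simp only [Complex.real_smul]
  rw [map_add, map_mul, map_mul, conj_ww_pow, conj_ww_pow, Complex.conj_ofReal,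
    Complex.conj_ofReal]
  have hA : ww n ^ (2 * a) ≠ 0 := pow_ne_zero _ (ww_ne_zero n)
  have hB : ww n ^ (2 * b) ≠ 0 := pow_ne_zero _ (ww_ne_zero n)
  have h1 : (ww n ^ (2 * a) * ww n ^ (2 * b)) * (ww n ^ (2 * a))⁻¹ = ww n ^ (2 * b) := by
    field_simp
  have h2 : (ww n ^ (2 * a) * ww n ^ (2 * b)) * (ww n ^ (2 * b))⁻¹ = ww n ^ (2 * a) := by
    field_simp
  have huv' : ((u : ℂ)) + (v : ℂ) = 1 := by
    rw [← Complex.ofReal_add, huv, Complex.ofReal_one]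
  linear_combination (ww n ^ (2 * a) + ww n ^ (2 * b)) * huv' + (u : ℂ) * h1 + (v : ℂ) * h2

/-- A vertex satisfies the line equation of any chord it is an endpoint of. -/
lemma line_eq_vertex (n : ℕ) (a b : ℕ) :
    ww n ^ (2 * a) + (ww n ^ (2 * a) * ww n ^ (2 * b)) * (starRingEnd ℂ) (ww n ^ (2 * a))
      = ww n ^ (2 * a) + ww n ^ (2 * b) := by
  rw [conj_ww_pow]
  have hA : ww n ^ (2 * a) ≠ 0 := pow_ne_zero _ (ww_ne_zero n)
  have h1 : (ww n ^ (2 * a) * ww n ^ (2 * b)) * (ww n ^ (2 * a))⁻¹ = ww n ^ (2 * b) := by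
    field_simp
  rw [h1]

/-- Two distinct lines meet in at most one point. -/
lemma line_unique {w w' s s' x y : ℂ} (hw : w ≠ w')
    (h1 : x + w * (starRingEnd ℂ) x = s) (h2 : x + w' * (starRingEnd ℂ) x = s')
    (h3 : y + w * (starRingEnd ℂ) y = s) (h4 : y + w' * (starRingEnd ℂ) y = s') : x = y := by
  have hc : (w - w') * (starRingEnd ℂ) x = (w - w') * (starRingEnd ℂ) y := by
    linear_combination h1 - h2 - h3 + h4
  have h5 := mul_left_cancel₀ (sub_ne_zero.mpr hw) hc
  have h6 := congrArg (starRingEnd ℂ) h5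
  simpa using h6

/-- distinct chords have distinct line coefficients -/
lemma w_ne (n : ℕ) {k l : ℕ} (hk : k < 2 * n + 1) (hl : l < 2 * n + 1) (hkl : k ≠ l) :
    ww n ^ (2 * k) * ww n ^ (2 * (k + n)) ≠ ww n ^ (2 * l) * ww n ^ (2 * (l + n)) := by
  intro hc
  rw [← pow_add, ← pow_add] at hc
  have hζ := hprim2 n
  have hc' : (ww n ^ 2) ^ ((2 * k + n) % (2 * n + 1)) = (ww n ^ 2) ^ ((2 * l + n) % (2 * n + 1)) := by
    rw [← pow_mul, ← pow_mul, ww_pow_two_mul_mod, ww_pow_two_mul_mod]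
    rw [show 2 * (2 * k + n) = 2 * k + 2 * (k + n) by ring,
      show 2 * (2 * l + n) = 2 * l + 2 * (l + n) by ring]
    exact hc
  have hc'' : (2 * k + n) % (2 * n + 1) = (2 * l + n) % (2 * n + 1) :=
    hζ.pow_inj (Nat.mod_lt _ (by omega)) (Nat.mod_lt _ (by omega)) hc'
  have h2 : 2 * k ≡ 2 * l [MOD 2 * n + 1] := Nat.ModEq.add_right_cancel' n hc''
  have h3 : k ≡ l [MOD 2 * n + 1] := by
    refine Nat.ModEq.cancel_left_of_coprime ?_ h2
    exact Nat.coprime_two_right.mpr ⟨n, by ring⟩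
  have := h3.eq_of_lt_of_lt hk hl
  exact hkl this

end StarAux

namespace StarAux
open Complex Real

/-- The affine parameter of the intersection point along the first chord. -/
noncomputable def tp (n j : ℕ) : ℝ :=
  Real.sin ((n + j : ℕ) * Real.pi / (2 * n + 1)) /
    (Real.sin ((n + j : ℕ) * Real.pi / (2 * n + 1)) +
      Real.sin ((n - j : ℕ) * Real.pi / (2 * n + 1)))

lemma sin_pos_aux (n : ℕ) {a : ℕ} (h0 : 0 < a) (h1 : a < 2 * n + 1) :
    0 < Real.sin ((a : ℕ) * Real.pi / (2 * n + 1)) := by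
  apply Real.sin_pos_of_pos_of_lt_pi
  · have hp := Real.pi_pos
    have : (0:ℝ) < (a:ℝ) := by exact_mod_cast h0
    positivity
  · have hp := Real.pi_pos
    rw [div_lt_iff₀ (by positivity)]
    have ha : (a : ℝ) < (2 * n + 1 : ℝ) := by exact_mod_cast h1
    nlinarith

lemma tp_mem (n : ℕ) {j : ℕ} (hj0 : 1 ≤ j) (hj1 : j + 1 ≤ n) :
    0 < tp n j ∧ tp n j < 1 := by
  have h1 : 0 < Real.sin ((n + j : ℕ) * Real.pi / (2 * n + 1)) :=
    sin_pos_aux n (by omega) (by omega)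
  have h2 : 0 < Real.sin ((n - j : ℕ) * Real.pi / (2 * n + 1)) :=
    sin_pos_aux n (by omega) (by omega)
  constructor
  · exact div_pos h1 (by linarith)
  · rw [tp, div_lt_one (by linarith)]; linarith

/-- Closed form of the parameter as a complex number. -/
lemma tp_eq (n : ℕ) {j : ℕ} (hj0 : 1 ≤ j) (hj1 : j + 1 ≤ n) :
    ((tp n j : ℝ) : ℂ) = (1 - ww n ^ (2 * (n + j))) /
      ((1 - ww n ^ (2 * n)) * (1 + ww n ^ (2 * j))) := by
  have h1 : 0 < Real.sin ((n + j : ℕ) * Real.pi / (2 * n + 1)) :=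
    sin_pos_aux n (by omega) (by omega)
  have h2 : 0 < Real.sin ((n - j : ℕ) * Real.pi / (2 * n + 1)) :=
    sin_pos_aux n (by omega) (by omega)
  have hsum : ((Real.sin ((n + j : ℕ) * Real.pi / (2 * n + 1)) +
      Real.sin ((n - j : ℕ) * Real.pi / (2 * n + 1)) : ℝ) : ℂ) ≠ 0 := by
    rw [Ne, Complex.ofReal_eq_zero]
    linarith
  rw [tp, Complex.ofReal_div, Complex.ofReal_add]
  rw [sin_eq n (n + j), sin_eq n (n - j)]
  obtain ⟨j', hj'⟩ : ∃ j', n = j + j' := ⟨n - j, by omega⟩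
  have hW : ww n ≠ 0 := ww_ne_zero n
  have hd1 : 1 - ww n ^ (2 * n) ≠ 0 := one_sub_ne n (by omega) (by omega)
  have hd2 : 1 + ww n ^ (2 * j) ≠ 0 := one_add_ne n (by omega)
  have hsum' : (ww n ^ (n + j) - (ww n ^ (n + j))⁻¹) / (2 * Complex.I) +
      (ww n ^ (n - j) - (ww n ^ (n - j))⁻¹) / (2 * Complex.I) ≠ 0 := by
    rw [← sin_eq n (n + j), ← sin_eq n (n - j), ← Complex.ofReal_add]
    exact hsum
  rw [← add_div] at hsum' ⊢
  have hI : (2 : ℂ) * Complex.I ≠ 0 := by simp [Complex.I_ne_zero]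
  rw [div_div_div_comm, div_self hI, div_one]
  have hsum'' : ww n ^ (n + j) - (ww n ^ (n + j))⁻¹ +
      (ww n ^ (n - j) - (ww n ^ (n - j))⁻¹) ≠ 0 := by
    intro hc
    exact hsum' (by rw [hc, zero_div])
  rw [div_eq_div_iff hsum'' (mul_ne_zero hd1 hd2)]
  rw [show 2 * (n + j) = 2 * (2 * j + j') by omega, show 2 * n = 2 * (j + j') by omega,
    show n - j = j' by omega, show n + j = 2 * j + j' by omega]
  field_simp
  ring

/-- The key collinearity identity. -/
lemma key_identity (n : ℕ) {j : ℕ} (hj0 : 1 ≤ j) (hj1 : j + 1 ≤ n) :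
    (1 - ((tp n j : ℝ) : ℂ)) + ((tp n j : ℝ) : ℂ) * ww n ^ (2 * n)
      = ((tp n j : ℝ) : ℂ) * ww n ^ (2 * j) + (1 - ((tp n j : ℝ) : ℂ)) * ww n ^ (2 * (j + n)) := by
  rw [tp_eq n hj0 hj1]
  have hd1 : 1 - ww n ^ (2 * n) ≠ 0 := one_sub_ne n (by omega) (by omega)
  have hd2 : 1 + ww n ^ (2 * j) ≠ 0 := one_add_ne n (by omega)
  field_simp
  ring

end StarAux

namespace StarAux
open Complex Real

/-- The intersection point of chords `E_k` and `E_{k+j}`. -/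
noncomputable def pt (n k j : ℕ) : ℂ :=
  ww n ^ (2 * k) * ((1 - ((tp n j : ℝ) : ℂ)) + ((tp n j : ℝ) : ℂ) * ww n ^ (2 * n))

lemma pt_mem_fst (n : ℕ) (k : ℕ) {j : ℕ} (hj0 : 1 ≤ j) (hj1 : j + 1 ≤ n) :
    pt n k j ∈ openSegment ℝ (ww n ^ (2 * k)) (ww n ^ (2 * (k + n))) := by
  obtain ⟨ht0, ht1⟩ := tp_mem n hj0 hj1
  refine ⟨1 - tp n j, tp n j, by linarith, ht0, by ring, ?_⟩
  simp only [Complex.real_smul]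
  rw [pt]
  push_cast
  rw [show 2 * (k + n) = 2 * k + 2 * n by ring, pow_add]
  ring

lemma pt_mem_snd (n : ℕ) (k : ℕ) {j : ℕ} (hj0 : 1 ≤ j) (hj1 : j + 1 ≤ n) :
    pt n k j ∈ openSegment ℝ (ww n ^ (2 * (k + j))) (ww n ^ (2 * (k + j + n))) := by
  obtain ⟨ht0, ht1⟩ := tp_mem n hj0 hj1
  refine ⟨tp n j, 1 - tp n j, ht0, by linarith, by ring, ?_⟩
  simp only [Complex.real_smul]
  rw [pt]
  have hkey := key_identity n hj0 hj1
  calc ((tp n j : ℝ) : ℂ) * ww n ^ (2 * (k + j)) +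
        ((1 - tp n j : ℝ) : ℂ) * ww n ^ (2 * (k + j + n))
      = ww n ^ (2 * k) * (((tp n j : ℝ) : ℂ) * ww n ^ (2 * j) +
          (1 - ((tp n j : ℝ) : ℂ)) * ww n ^ (2 * (j + n))) := by
        push_cast
        rw [show 2 * (k + j) = 2 * k + 2 * j by ring,
          show 2 * (k + j + n) = 2 * k + 2 * (j + n) by ring, pow_add, pow_add]
        ring
    _ = ww n ^ (2 * k) * ((1 - ((tp n j : ℝ) : ℂ)) + ((tp n j : ℝ) : ℂ) * ww n ^ (2 * n)) := by
        rw [← hkey]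

lemma pt_eq_frac (n : ℕ) (k : ℕ) {j : ℕ} (hj0 : 1 ≤ j) (hj1 : j + 1 ≤ n) :
    pt n k j = ww n ^ (2 * (k + j)) * (1 + ww n ^ (2 * n)) / (1 + ww n ^ (2 * j)) := by
  rw [pt, tp_eq n hj0 hj1]
  have hd1 : 1 - ww n ^ (2 * n) ≠ 0 := one_sub_ne n (by omega) (by omega)
  have hd2 : 1 + ww n ^ (2 * j) ≠ 0 := one_add_ne n (by omega)
  rw [show 2 * (k + j) = 2 * k + 2 * j by ring, pow_add]
  field_simp
  ring

lemma abs_ww_pow (n a : ℕ) : ‖ww n ^ a‖ = 1 := by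
  rw [ww_pow, Complex.norm_exp]
  have h : ((a : ℂ) * (Real.pi * Complex.I / (2 * n + 1))).re = 0 := by
    have h2 : ((a : ℂ) * (Real.pi * Complex.I / (2 * n + 1)))
        = ((a * Real.pi / (2 * n + 1) : ℝ) : ℂ) * Complex.I := by push_cast; ring
    rw [h2, Complex.mul_I_re, Complex.ofReal_im, neg_zero]
  rw [h, Real.exp_zero]

lemma cos_pos_aux (n : ℕ) {a : ℕ} (ha : a ≤ n) : 0 < Real.cos ((a : ℕ) * Real.pi / (2 * n + 1)) := by
  apply Real.cos_pos_of_mem_Ioo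
  constructor
  · have hp := Real.pi_pos
    have : (0:ℝ) ≤ (a:ℝ) := Nat.cast_nonneg a
    have hd : (0:ℝ) < 2 * (n:ℝ) + 1 := by positivity
    have : 0 ≤ (a:ℝ) * Real.pi / (2 * n + 1) := by positivity
    linarith
  · have hp := Real.pi_pos
    rw [div_lt_iff₀ (by positivity)]
    have ha' : (a : ℝ) ≤ (n : ℝ) := by exact_mod_cast ha
    nlinarith

lemma one_add_eq (n a : ℕ) :
    1 + ww n ^ (2 * a) = ww n ^ a * (2 * (Real.cos ((a : ℕ) * Real.pi / (2 * n + 1)) : ℂ)) := by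
  rw [ww_pow_eq n a, show 2 * a = a + a by ring, pow_add, ww_pow_eq n a]
  have : ((Real.sin ((a : ℕ) * Real.pi / (2 * n + 1)) : ℂ)) * Complex.I *
      ((Real.sin ((a : ℕ) * Real.pi / (2 * n + 1)) : ℂ) * Complex.I)
      = -(Real.sin ((a : ℕ) * Real.pi / (2 * n + 1)) : ℂ) ^ 2 := by
    rw [mul_mul_mul_comm, Complex.I_mul_I]
    ring
  have hpy : (Real.cos ((a : ℕ) * Real.pi / (2 * n + 1)) : ℂ) ^ 2 +
      (Real.sin ((a : ℕ) * Real.pi / (2 * n + 1)) : ℂ) ^ 2 = 1 := by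
    norm_cast
    rw [add_comm]
    exact_mod_cast Real.sin_sq_add_cos_sq _
  linear_combination (-1 : ℂ) * hpy + ((Real.sin ((a : ℕ) * Real.pi / (2 * n + 1)) : ℂ)) ^ 2 * Complex.I_sq

lemma abs_one_add (n : ℕ) {a : ℕ} (ha : a ≤ n) :
    ‖1 + ww n ^ (2 * a)‖ = 2 * Real.cos ((a : ℕ) * Real.pi / (2 * n + 1)) := by
  rw [one_add_eq n a, norm_mul, abs_ww_pow, one_mul]
  rw [norm_mul]
  simp only [Complex.norm_real, Real.norm_eq_abs, Complex.norm_two]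
  rw [abs_of_pos (cos_pos_aux n ha)]

end StarAux

namespace StarAux
open Complex Real

lemma pt_ne_zero (n : ℕ) (k : ℕ) {j : ℕ} (hj0 : 1 ≤ j) (hj1 : j + 1 ≤ n) :
    pt n k j ≠ 0 := by
  rw [pt_eq_frac n k hj0 hj1]
  have h1 : ww n ^ (2 * (k + j)) ≠ 0 := pow_ne_zero _ (ww_ne_zero n)
  have h2 : 1 + ww n ^ (2 * n) ≠ 0 := one_add_ne n le_rfl
  have h3 : 1 + ww n ^ (2 * j) ≠ 0 := one_add_ne n (by omega)
  exact div_ne_zero (mul_ne_zero h1 h2) h3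

lemma pt_abs (n : ℕ) (k : ℕ) {j : ℕ} (hj0 : 1 ≤ j) (hj1 : j + 1 ≤ n) :
    ‖pt n k j‖
      = (2 * Real.cos ((n : ℕ) * Real.pi / (2 * n + 1)))
        / (2 * Real.cos ((j : ℕ) * Real.pi / (2 * n + 1))) := by
  rw [pt_eq_frac n k hj0 hj1, norm_div, norm_mul, abs_ww_pow, one_mul,
    abs_one_add n (le_refl n), abs_one_add n (by omega : j ≤ n)]

lemma pt_inj (n : ℕ) (hn : 2 ≤ n) {k k' j j' : ℕ} (hk : k < 2 * n + 1) (hk' : k' < 2 * n + 1)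
    (hj0 : 1 ≤ j) (hj1 : j + 1 ≤ n) (hj0' : 1 ≤ j') (hj1' : j' + 1 ≤ n)
    (heq : pt n k j = pt n k' j') : k = k' ∧ j = j' := by
  have hp := Real.pi_pos
  have habs := congrArg (fun z : ℂ => ‖z‖) heq
  rw [pt_abs n k hj0 hj1, pt_abs n k' hj0' hj1'] at habs
  have hcn : 0 < Real.cos ((n : ℕ) * Real.pi / (2 * n + 1)) := cos_pos_aux n le_rfl
  have hcj : 0 < Real.cos ((j : ℕ) * Real.pi / (2 * n + 1)) := cos_pos_aux n (by omega)
  have hcj' : 0 < Real.cos ((j' : ℕ) * Real.pi / (2 * n + 1)) := cos_pos_aux n (by omega)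
  have hcos : Real.cos ((j : ℕ) * Real.pi / (2 * n + 1))
      = Real.cos ((j' : ℕ) * Real.pi / (2 * n + 1)) := by
    rw [div_eq_div_iff (by positivity) (by positivity)] at habs
    nlinarith
  have hargj : ((j : ℕ) : ℝ) * Real.pi / (2 * n + 1) ∈ Set.Icc 0 Real.pi := by
    constructor
    · positivity
    · rw [div_le_iff₀ (by positivity)]
      have : (j : ℝ) ≤ 2 * n + 1 := by
        have : (j : ℝ) ≤ (n : ℝ) := by exact_mod_cast (by omega : j ≤ n)
        linarith [Nat.cast_nonneg (α := ℝ) n]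
      nlinarith
  have hargj' : ((j' : ℕ) : ℝ) * Real.pi / (2 * n + 1) ∈ Set.Icc 0 Real.pi := by
    constructor
    · positivity
    · rw [div_le_iff₀ (by positivity)]
      have : (j' : ℝ) ≤ 2 * n + 1 := by
        have : (j' : ℝ) ≤ (n : ℝ) := by exact_mod_cast (by omega : j' ≤ n)
        linarith [Nat.cast_nonneg (α := ℝ) n]
      nlinarith
  have hjj : j = j' := by
    have h := Real.injOn_cos hargj hargj' hcos
    field_simp at h
    exact_mod_cast h
  subst hjj
  refine ⟨?_, rfl⟩
  have hz : ww n ^ (2 * k) * ((1 - ((tp n j : ℝ) : ℂ)) + ((tp n j : ℝ) : ℂ) * ww n ^ (2 * n))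
      = ww n ^ (2 * k') * ((1 - ((tp n j : ℝ) : ℂ)) + ((tp n j : ℝ) : ℂ) * ww n ^ (2 * n)) := heq
  have hzne : ((1 - ((tp n j : ℝ) : ℂ)) + ((tp n j : ℝ) : ℂ) * ww n ^ (2 * n)) ≠ 0 := by
    intro hc
    apply pt_ne_zero n k hj0 hj1
    rw [pt, hc, mul_zero]
  have hww : ww n ^ (2 * k) = ww n ^ (2 * k') := mul_right_cancel₀ hzne hz
  have := (hprim n).pow_inj (by omega) (by omega) hww
  omega

end StarAux

namespace StarAux
open Complex Real

lemma ww_shift (n a : ℕ) : ww n ^ (2 * (a + (2 * n + 1))) = ww n ^ (2 * a) := by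
  rw [show 2 * (a + (2 * n + 1)) = 2 * a + 2 * (2 * n + 1) by ring, pow_add,
    (hprim n).pow_eq_one, mul_one]

lemma ww_add_n (n a b : ℕ) (h : ww n ^ (2 * a) = ww n ^ (2 * b)) :
    ww n ^ (2 * (a + n)) = ww n ^ (2 * (b + n)) := by
  rw [show 2 * (a + n) = 2 * a + 2 * n by ring, show 2 * (b + n) = 2 * b + 2 * n by ring,
    pow_add, pow_add, h]

lemma ww_step_ne (n : ℕ) (hn : 1 ≤ n) (l : ℕ) : ww n ^ (2 * l) ≠ ww n ^ (2 * (l + n)) := by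
  intro hc
  have h1 : ww n ^ (2 * (l + n)) = ww n ^ (2 * l) * ww n ^ (2 * n) := by
    rw [← pow_add]; congr 1; ring
  rw [h1] at hc
  nth_rewrite 1 [← mul_one (ww n ^ (2 * l))] at hc
  have h2 := mul_left_cancel₀ (pow_ne_zero (2 * l) (ww_ne_zero n)) hc
  exact ww_pow_ne_one n (by omega) (by omega) h2.symm

end StarAux

open StarAux in
theorem stmt_4 (n : ℕ) (hn : 2 ≤ n) :
    ({p : ℂ | ∃ k l : ℕ, k < 2 * n + 1 ∧ l < 2 * n + 1 ∧ k ≠ l ∧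
        p ∈ openSegment ℝ (starVertex n k) (starVertex n ((k + n) % (2 * n + 1))) ∧
        p ∈ openSegment ℝ (starVertex n l) (starVertex n ((l + n) % (2 * n + 1)))}).ncard
      = (n - 1) * (2 * n + 1) := by
  classical
  have hset : {p : ℂ | ∃ k l : ℕ, k < 2 * n + 1 ∧ l < 2 * n + 1 ∧ k ≠ l ∧
        p ∈ openSegment ℝ (starVertex n k) (starVertex n ((k + n) % (2 * n + 1))) ∧
        p ∈ openSegment ℝ (starVertex n l) (starVertex n ((l + n) % (2 * n + 1)))}
      = (fun q : ℕ × ℕ => pt n q.1 q.2) ''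
        ↑((Finset.range (2 * n + 1)) ×ˢ (Finset.Icc 1 (n - 1))) := by
    ext p
    constructor
    · rintro ⟨k, l, hk, hl, hkl, h1, h2⟩
      rw [starVertex_eq, starVertex_mod] at h1 h2
      have e1 := line_eq n h1
      have e2 := line_eq n h2
      have hwne := w_ne n hk hl hkl
      obtain ⟨j, hj1, hj2, hjc⟩ : ∃ j, 1 ≤ j ∧ j ≤ 2 * n ∧
          (k + j = l ∨ k + j = l + (2 * n + 1)) := by
        by_cases h : k ≤ l
        · exact ⟨l - k, by omega, by omega, Or.inl (by omega)⟩
        · exact ⟨2 * n + 1 + l - k, by omega, by omega, Or.inr (by omega)⟩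
      have hL1 : ww n ^ (2 * (k + j)) = ww n ^ (2 * l) := by
        rcases hjc with h | h
        · rw [h]
        · rw [h, ww_shift]
      have hL2 : ww n ^ (2 * (k + j + n)) = ww n ^ (2 * (l + n)) := ww_add_n n _ _ hL1
      by_cases hA : j + 1 ≤ n
      · -- interleaving, near case
        have m1 := pt_mem_fst n k hj1 hA
        have m2 := pt_mem_snd n k hj1 hA
        rw [hL1, hL2] at m2
        have q1 := line_eq n m1
        have q2 := line_eq n m2
        have hpq := line_unique hwne e1 e2 q1 q2
        refine ⟨(k, j), Finset.mem_coe.mpr ?_, hpq.symm⟩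
        rw [Finset.mem_product, Finset.mem_range, Finset.mem_Icc]
        exact ⟨hk, hj1, by omega⟩
      · by_cases hC : j = n
        · exfalso
          have hy : ww n ^ (2 * l) = ww n ^ (2 * (k + n)) := by
            rw [show k + n = k + j by omega]
            exact hL1.symm
          have v2 := line_eq_vertex n l (l + n)
          have v1 : ww n ^ (2 * l) + (ww n ^ (2 * k) * ww n ^ (2 * (k + n))) *
              (starRingEnd ℂ) (ww n ^ (2 * l)) = ww n ^ (2 * k) + ww n ^ (2 * (k + n)) := by
            rw [hy]
            linear_combination line_eq_vertex n (k + n) k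
          have hp_eq : p = ww n ^ (2 * l) := line_unique hwne e1 e2 v1 v2
          rw [hp_eq] at h2
          exact ww_step_ne n (by omega) l (left_mem_openSegment_iff.mp h2)
        · by_cases hD : j = n + 1
          · exfalso
            have hy : ww n ^ (2 * (l + n)) = ww n ^ (2 * k) := by
              rw [← hL2, show k + j + n = k + (2 * n + 1) by omega, ww_shift]
            have v2 : ww n ^ (2 * (l + n)) + (ww n ^ (2 * l) * ww n ^ (2 * (l + n))) *
                (starRingEnd ℂ) (ww n ^ (2 * (l + n)))
                = ww n ^ (2 * l) + ww n ^ (2 * (l + n)) := by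
              linear_combination line_eq_vertex n (l + n) l
            have v1 : ww n ^ (2 * (l + n)) + (ww n ^ (2 * k) * ww n ^ (2 * (k + n))) *
                (starRingEnd ℂ) (ww n ^ (2 * (l + n)))
                = ww n ^ (2 * k) + ww n ^ (2 * (k + n)) := by
              rw [hy]
              exact line_eq_vertex n k (k + n)
            have hp_eq : p = ww n ^ (2 * (l + n)) := line_unique hwne e1 e2 v1 v2
            rw [hp_eq] at h2
            exact ww_step_ne n (by omega) l (right_mem_openSegment_iff.mp h2)
          · -- far case
            have hB : n + 2 ≤ j := by omega
            set j' := 2 * n + 1 - j with hj'def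
            have hj0' : 1 ≤ j' := by omega
            have hj1' : j' + 1 ≤ n := by omega
            have hL1' : ww n ^ (2 * (l + j')) = ww n ^ (2 * k) := by
              rcases hjc with h | h
              · rw [show l + j' = k + (2 * n + 1) by omega, ww_shift]
              · rw [show l + j' = k by omega]
            have hL2' : ww n ^ (2 * (l + j' + n)) = ww n ^ (2 * (k + n)) := ww_add_n n _ _ hL1'
            have m1 := pt_mem_fst n l hj0' hj1'
            have m2 := pt_mem_snd n l hj0' hj1'
            rw [hL1', hL2'] at m2
            have q2 := line_eq n m1
            have q1 := line_eq n m2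
            have hpq := line_unique hwne e1 e2 q1 q2
            refine ⟨(l, j'), Finset.mem_coe.mpr ?_, hpq.symm⟩
            rw [Finset.mem_product, Finset.mem_range, Finset.mem_Icc]
            exact ⟨hl, hj0', by omega⟩
    · rintro ⟨⟨k, j⟩, hmem, rfl⟩
      rw [Finset.mem_coe, Finset.mem_product, Finset.mem_range, Finset.mem_Icc] at hmem
      obtain ⟨hk, hj1, hj2⟩ := hmem
      have hjn : j + 1 ≤ n := by omega
      set l := (k + j) % (2 * n + 1) with hldef
      have hlprop : l ≠ k ∧ l < 2 * n + 1 := by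
        rw [hldef]
        rcases Nat.lt_or_ge (k + j) (2 * n + 1) with h | h
        · rw [Nat.mod_eq_of_lt h]; omega
        · rw [Nat.mod_eq_sub_mod h, Nat.mod_eq_of_lt (by omega)]; omega
      refine ⟨k, l, hk, hlprop.2, fun hh => hlprop.1 hh.symm, ?_, ?_⟩
      · rw [starVertex_eq, starVertex_mod]
        exact pt_mem_fst n k hj1 hjn
      · rw [show starVertex n l = ww n ^ (2 * (k + j)) from starVertex_mod n (k + j),
          starVertex_mod]
        have hl2 : ww n ^ (2 * (l + n)) = ww n ^ (2 * (k + j + n)) :=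
          ww_add_n n l (k + j) (ww_pow_two_mul_mod n (k + j))
        rw [hl2]
        exact pt_mem_snd n k hj1 hjn
  rw [hset]
  have hinj : Set.InjOn (fun q : ℕ × ℕ => StarAux.pt n q.1 q.2)
      ↑((Finset.range (2 * n + 1)) ×ˢ (Finset.Icc 1 (n - 1))) := by
    rintro ⟨k, j⟩ ha ⟨k', j'⟩ hb hab
    rw [Finset.mem_coe, Finset.mem_product, Finset.mem_range, Finset.mem_Icc] at ha hb
    obtain ⟨h1, h2⟩ := StarAux.pt_inj n hn ha.1 hb.1 ha.2.1 (by omega) hb.2.1 (by omega) hab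
    simp only [Prod.mk.injEq]
    exact ⟨h1, h2⟩
  rw [Set.ncard_image_of_injOn hinj, Set.ncard_coe_finset, Finset.card_product,
    Finset.card_range, Nat.card_Icc, show n - 1 + 1 - 1 = n - 1 by omega, Nat.mul_comm]
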